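/- A vector x defined greedily from a bisubmodular function f along a full chain of signed subsets lies in P₊(f): if (∅,∅)=(U₀,W₀)⊏⋯⊏(Uₙ,Wₙ) is a chain in 3^N adding one signed element at a time, and x is defined by the increments f(Uₖ,Wₖ)−f(U_{k−1},W_{k−1}) (with sign −1 if the element is added to the W-side), then x(X)−x(Y) ≤ f(X,Y) for every (X,Y) ∈ 3^N. -/

import Mathlib

open Finset

variable {α : Type*} [DecidableEq α]

private lemma greedyAux₁ {X A : Finset α} {e : α} (heX : e ∈ X) :
    X.erase e ∪ insert e A = X ∪ A := by
  ext j
  by_cases hj : j = e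
  · subst hj; simp [heX]
  · simp only [mem_union, mem_erase, mem_insert, hj]; tauto

private lemma greedyAux₄ {X A : Finset α} {e : α} (heX : e ∉ X) :
    (X ∪ A) ∩ insert e A = A := by
  ext j
  by_cases hj : j = e
  · subst hj; simp [heX]
  · simp only [mem_inter, mem_union, mem_insert, hj]; tauto

private lemma greedyAux₂ {X Y A B : Finset α} {e : α}
    (hXY : Disjoint X Y) (hXA : Disjoint X A) (hXB : Disjoint X B)
    (hYA : Disjoint Y A) (hYB : Disjoint Y B) (hAB : Disjoint A B)
    (heY : e ∈ Y) (heA : e ∉ A) :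
    ((X ∪ A) ∪ insert e A) \ ((Y ∪ B) ∪ B) = X ∪ A := by
  have heX : e ∉ X := fun h => disjoint_left.mp hXY h heY
  have heB : e ∉ B := disjoint_left.mp hYB heY
  ext j
  have j1 : j ∈ X → j ∉ Y := fun h => disjoint_left.mp hXY h
  have j2 : j ∈ X → j ∉ B := fun h => disjoint_left.mp hXB h
  have j3 : j ∈ A → j ∉ Y := fun h => disjoint_right.mp hYA h
  have j4 : j ∈ A → j ∉ B := fun h => disjoint_left.mp hAB h
  by_cases hj : j = e
  · subst hj; simp [heX, heY, heA, heB]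
  · simp only [mem_sdiff, mem_union, mem_insert, hj]; tauto

private lemma greedyAux₃ {X Y A B : Finset α} {e : α}
    (hXY : Disjoint X Y) (hXA : Disjoint X A) (hXB : Disjoint X B)
    (hYA : Disjoint Y A) (hYB : Disjoint Y B) (hAB : Disjoint A B)
    (heY : e ∈ Y) (heA : e ∉ A) :
    ((Y ∪ B) ∪ B) \ ((X ∪ A) ∪ insert e A) = Y.erase e ∪ B := by
  have heX : e ∉ X := fun h => disjoint_left.mp hXY h heY
  have heB : e ∉ B := disjoint_left.mp hYB heY
  ext j
  have j1 : j ∈ Y → j ∉ X := fun h => disjoint_right.mp hXY h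
  have j2 : j ∈ Y → j ∉ A := fun h => disjoint_left.mp hYA h
  have j3 : j ∈ B → j ∉ X := fun h => disjoint_right.mp hXB h
  have j4 : j ∈ B → j ∉ A := fun h => disjoint_right.mp hAB h
  by_cases hj : j = e
  · subst hj; simp [heX, heY, heA, heB]
  · simp only [mem_sdiff, mem_union, mem_insert, mem_erase, hj]; tauto

private lemma greedyAux₆ {X Y A B : Finset α} {e : α}
    (hXY : Disjoint X Y) (hXA : Disjoint X A) (hXB : Disjoint X B)
    (hYA : Disjoint Y A) (hYB : Disjoint Y B) (hAB : Disjoint A B)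
    (heY : e ∈ Y) (heA : e ∉ A) :
    ((X ∪ A) ∪ insert e A) \ ((Y.erase e ∪ B) ∪ B) = X ∪ insert e A := by
  have heX : e ∉ X := fun h => disjoint_left.mp hXY h heY
  have heB : e ∉ B := disjoint_left.mp hYB heY
  ext j
  have j1 : j ∈ X → j ∉ Y := fun h => disjoint_left.mp hXY h
  have j2 : j ∈ X → j ∉ B := fun h => disjoint_left.mp hXB h
  have j3 : j ∈ A → j ∉ Y := fun h => disjoint_right.mp hYA h
  have j4 : j ∈ A → j ∉ B := fun h => disjoint_left.mp hAB h
  by_cases hj : j = e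
  · subst hj; simp [heX, heY, heA, heB]
  · simp only [mem_sdiff, mem_union, mem_insert, mem_erase, hj]; tauto

private lemma greedyAux₇ {X Y A B : Finset α} {e : α}
    (hXY : Disjoint X Y) (hXA : Disjoint X A) (hXB : Disjoint X B)
    (hYA : Disjoint Y A) (hYB : Disjoint Y B) (hAB : Disjoint A B)
    (heY : e ∈ Y) (heA : e ∉ A) :
    ((Y.erase e ∪ B) ∪ B) \ ((X ∪ A) ∪ insert e A) = Y.erase e ∪ B := by
  have heX : e ∉ X := fun h => disjoint_left.mp hXY h heY
  have heB : e ∉ B := disjoint_left.mp hYB heY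
  ext j
  have j1 : j ∈ Y → j ∉ X := fun h => disjoint_right.mp hXY h
  have j2 : j ∈ Y → j ∉ A := fun h => disjoint_left.mp hYA h
  have j3 : j ∈ B → j ∉ X := fun h => disjoint_right.mp hXB h
  have j4 : j ∈ B → j ∉ A := fun h => disjoint_right.mp hAB h
  by_cases hj : j = e
  · subst hj; simp [heX, heY, heA, heB]
  · simp only [mem_sdiff, mem_union, mem_insert, mem_erase, hj]; tauto

private lemma greedyAux₉ {X Y A B : Finset α} {e : α}
    (hXY : Disjoint X Y) (hXA : Disjoint X A) (hXB : Disjoint X B)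
    (hYA : Disjoint Y A) (hYB : Disjoint Y B) (hAB : Disjoint A B)
    (heY : e ∉ Y) (heB : e ∉ B) :
    ((X ∪ A) ∪ insert e A) \ ((Y ∪ B) ∪ B) = X ∪ insert e A := by
  ext j
  have j1 : j ∈ X → j ∉ Y := fun h => disjoint_left.mp hXY h
  have j2 : j ∈ X → j ∉ B := fun h => disjoint_left.mp hXB h
  have j3 : j ∈ A → j ∉ Y := fun h => disjoint_right.mp hYA h
  have j4 : j ∈ A → j ∉ B := fun h => disjoint_left.mp hAB h
  by_cases hj : j = e
  · subst hj; simp [heY, heB]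
  · simp only [mem_sdiff, mem_union, mem_insert, hj]; tauto

private lemma greedyAux₁₀ {X Y A B : Finset α} {e : α}
    (hXY : Disjoint X Y) (hXA : Disjoint X A) (hXB : Disjoint X B)
    (hYA : Disjoint Y A) (hYB : Disjoint Y B) (hAB : Disjoint A B)
    (heY : e ∉ Y) (heB : e ∉ B) :
    ((Y ∪ B) ∪ B) \ ((X ∪ A) ∪ insert e A) = Y ∪ B := by
  ext j
  have j1 : j ∈ Y → j ∉ X := fun h => disjoint_right.mp hXY h
  have j2 : j ∈ Y → j ∉ A := fun h => disjoint_left.mp hYA h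
  have j3 : j ∈ B → j ∉ X := fun h => disjoint_right.mp hXB h
  have j4 : j ∈ B → j ∉ A := fun h => disjoint_right.mp hAB h
  by_cases hj : j = e
  · subst hj; simp [heY, heB]
  · simp only [mem_sdiff, mem_union, mem_insert, hj]; tauto

set_option maxHeartbeats 1000000 in
/-- A vector defined greedily from a bisubmodular function along a full chain of
signed subsets lies in the bisubmodular polyhedron `P₊(f)`. -/
theorem greedy_mem_polyhedron {n : ℕ} (f : Finset (Fin n) → Finset (Fin n) → ℝ)
    (hbi : ∀ X₁ Y₁ X₂ Y₂ : Finset (Fin n), Disjoint X₁ Y₁ → Disjoint X₂ Y₂ →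
      f ((X₁ ∪ X₂) \ (Y₁ ∪ Y₂)) ((Y₁ ∪ Y₂) \ (X₁ ∪ X₂)) + f (X₁ ∩ X₂) (Y₁ ∩ Y₂)
        ≤ f X₁ Y₁ + f X₂ Y₂)
    (hf0 : f ∅ ∅ = 0)
    (U W : ℕ → Finset (Fin n)) (x : Fin n → ℝ)
    (hU0 : U 0 = ∅) (hW0 : W 0 = ∅)
    (hdisj : ∀ k ≤ n, Disjoint (U k) (W k))
    (hspan : U n ∪ W n = Finset.univ)
    (hstep : ∀ k < n,
      (∃ i : Fin n, i ∉ U k ∧ U (k + 1) = insert i (U k) ∧ W (k + 1) = W k ∧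
        x i = f (U (k + 1)) (W (k + 1)) - f (U k) (W k)) ∨
      (∃ i : Fin n, i ∉ W k ∧ W (k + 1) = insert i (W k) ∧ U (k + 1) = U k ∧
        x i = -(f (U (k + 1)) (W (k + 1)) - f (U k) (W k)))) :
    ∀ X Y : Finset (Fin n), Disjoint X Y →
      ∑ i ∈ X, x i - ∑ i ∈ Y, x i ≤ f X Y := by
  have key : ∀ d t, t + d = n → ∀ X Y : Finset (Fin n), Disjoint X Y →
      Disjoint X (U t ∪ W t) → Disjoint Y (U t ∪ W t) →
      ∑ i ∈ X, x i - ∑ i ∈ Y, x i ≤ f (X ∪ U t) (Y ∪ W t) - f (U t) (W t) := by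
    intro d
    induction d with
    | zero =>
      intro t ht X Y hXY hXS hYS
      have htn : t = n := by omega
      subst htn
      have hX : X = ∅ := eq_empty_of_forall_notMem (fun j hj =>
        (disjoint_left.mp hXS hj) (by rw [hspan]; exact mem_univ j))
      have hY : Y = ∅ := eq_empty_of_forall_notMem (fun j hj =>
        (disjoint_left.mp hYS hj) (by rw [hspan]; exact mem_univ j))
      subst hX; subst hY
      simp
    | succ d ih =>
      intro t ht X Y hXY hXS hYS
      have htn : t < n := by omega
      have hUW : Disjoint (U t) (W t) := hdisj t (le_of_lt htn)
      have hXU : Disjoint X (U t) := hXS.mono_right subset_union_left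
      have hXW : Disjoint X (W t) := hXS.mono_right subset_union_right
      have hYU : Disjoint Y (U t) := hYS.mono_right subset_union_left
      have hYW : Disjoint Y (W t) := hYS.mono_right subset_union_right
      have mXY : ∀ j, j ∈ X → j ∉ Y := fun j h => disjoint_left.mp hXY h
      have mXU : ∀ j, j ∈ X → j ∉ U t := fun j h => disjoint_left.mp hXU h
      have mXW : ∀ j, j ∈ X → j ∉ W t := fun j h => disjoint_left.mp hXW h
      have mYU : ∀ j, j ∈ Y → j ∉ U t := fun j h => disjoint_left.mp hYU h
      have mYW : ∀ j, j ∈ Y → j ∉ W t := fun j h => disjoint_left.mp hYW h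
      rcases hstep t htn with ⟨e, heU, hU1, hW1, hxe⟩ | ⟨e, heW, hW1, hU1, hxe⟩
      · -- step adds e to the U-side
        have hd1 : Disjoint (insert e (U t)) (W t) := by
          have h := hdisj (t+1) (by omega)
          rwa [hU1, hW1] at h
        have heW : e ∉ W t := disjoint_left.mp hd1 (mem_insert_self e (U t))
        rw [hU1, hW1] at hxe
        by_cases heX : e ∈ X
        · -- e ∈ X : matched sign
          have heY : e ∉ Y := mXY e heX
          have h1 : Disjoint (X.erase e) Y := hXY.mono_left (erase_subset e X)
          have h2 : Disjoint (X.erase e) (U (t+1) ∪ W (t+1)) := by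
            rw [hU1, hW1, disjoint_left]
            intro a ha hb
            simp only [mem_erase] at ha
            simp only [mem_union, mem_insert] at hb
            rcases hb with (rfl | hb) | hb
            · exact ha.1 rfl
            · exact mXU a ha.2 hb
            · exact mXW a ha.2 hb
          have h3 : Disjoint Y (U (t+1) ∪ W (t+1)) := by
            rw [hU1, hW1, disjoint_left]
            intro a ha hb
            simp only [mem_union, mem_insert] at hb
            rcases hb with (rfl | hb) | hb
            · exact heY ha
            · exact mYU a ha hb
            · exact mYW a ha hb
          have ihres := ih (t+1) (by omega) (X.erase e) Y h1 h2 h3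
          rw [hU1, hW1, greedyAux₁ heX] at ihres
          have hsum : ∑ i ∈ X.erase e, x i + x e = ∑ i ∈ X, x i :=
            sum_erase_add X x heX
          linarith
        · by_cases heY : e ∈ Y
          · -- e ∈ Y : mismatched sign, two bisubmodular inequalities
            have h1 : Disjoint X (Y.erase e) := hXY.mono_right (erase_subset e Y)
            have h2 : Disjoint X (U (t+1) ∪ W (t+1)) := by
              rw [hU1, hW1, disjoint_left]
              intro a ha hb
              simp only [mem_union, mem_insert] at hb
              rcases hb with (rfl | hb) | hb
              · exact heX ha
              · exact mXU a ha hb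
              · exact mXW a ha hb
            have h3 : Disjoint (Y.erase e) (U (t+1) ∪ W (t+1)) := by
              rw [hU1, hW1, disjoint_left]
              intro a ha hb
              simp only [mem_erase] at ha
              simp only [mem_union, mem_insert] at hb
              rcases hb with (rfl | hb) | hb
              · exact ha.1 rfl
              · exact mYU a ha.2 hb
              · exact mYW a ha.2 hb
            have ihres := ih (t+1) (by omega) X (Y.erase e) h1 h2 h3
            rw [hU1, hW1] at ihres
            have d1 : Disjoint (X ∪ U t) (Y ∪ W t) := by
              simp only [disjoint_union_left, disjoint_union_right]
              exact ⟨⟨hXY, hYU.symm⟩, hXW, hUW⟩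
            have d3 : Disjoint (X ∪ U t) (Y.erase e ∪ W t) :=
              d1.mono_right (union_subset_union (erase_subset e Y) (Subset.refl (W t)))
            have b1 := hbi (X ∪ U t) (Y ∪ W t) (insert e (U t)) (W t) d1 hd1
            have b2 := hbi (X ∪ U t) (Y.erase e ∪ W t) (insert e (U t)) (W t) d3 hd1
            rw [greedyAux₂ hXY hXU hXW hYU hYW hUW heY heU,
              greedyAux₃ hXY hXU hXW hYU hYW hUW heY heU,
              greedyAux₄ heX, union_inter_cancel_right] at b1
            rw [greedyAux₆ hXY hXU hXW hYU hYW hUW heY heU,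
              greedyAux₇ hXY hXU hXW hYU hYW hUW heY heU,
              greedyAux₄ heX, union_inter_cancel_right] at b2
            have hsum : ∑ i ∈ Y.erase e, x i + x e = ∑ i ∈ Y, x i :=
              sum_erase_add Y x heY
            linarith
          · -- e ∉ X ∪ Y : one bisubmodular inequality
            have h2 : Disjoint X (U (t+1) ∪ W (t+1)) := by
              rw [hU1, hW1, disjoint_left]
              intro a ha hb
              simp only [mem_union, mem_insert] at hb
              rcases hb with (rfl | hb) | hb
              · exact heX ha
              · exact mXU a ha hb
              · exact mXW a ha hb
            have h3 : Disjoint Y (U (t+1) ∪ W (t+1)) := by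
              rw [hU1, hW1, disjoint_left]
              intro a ha hb
              simp only [mem_union, mem_insert] at hb
              rcases hb with (rfl | hb) | hb
              · exact heY ha
              · exact mYU a ha hb
              · exact mYW a ha hb
            have ihres := ih (t+1) (by omega) X Y hXY h2 h3
            rw [hU1, hW1] at ihres
            have d1 : Disjoint (X ∪ U t) (Y ∪ W t) := by
              simp only [disjoint_union_left, disjoint_union_right]
              exact ⟨⟨hXY, hYU.symm⟩, hXW, hUW⟩
            have b1 := hbi (X ∪ U t) (Y ∪ W t) (insert e (U t)) (W t) d1 hd1
            rw [greedyAux₉ hXY hXU hXW hYU hYW hUW heY heW,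
              greedyAux₁₀ hXY hXU hXW hYU hYW hUW heY heW,
              greedyAux₄ heX, union_inter_cancel_right] at b1
            linarith
      · -- step adds e to the W-side
        have hd1 : Disjoint (U t) (insert e (W t)) := by
          have h := hdisj (t+1) (by omega)
          rwa [hU1, hW1] at h
        have heU : e ∉ U t := disjoint_right.mp hd1 (mem_insert_self e (W t))
        rw [hU1, hW1] at hxe
        by_cases heY : e ∈ Y
        · -- e ∈ Y : matched sign
          have heX : e ∉ X := fun h => mXY e h heY
          have h1 : Disjoint X (Y.erase e) := hXY.mono_right (erase_subset e Y)
          have h2 : Disjoint X (U (t+1) ∪ W (t+1)) := by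
            rw [hU1, hW1, disjoint_left]
            intro a ha hb
            simp only [mem_union, mem_insert] at hb
            rcases hb with hb | (rfl | hb)
            · exact mXU a ha hb
            · exact heX ha
            · exact mXW a ha hb
          have h3 : Disjoint (Y.erase e) (U (t+1) ∪ W (t+1)) := by
            rw [hU1, hW1, disjoint_left]
            intro a ha hb
            simp only [mem_erase] at ha
            simp only [mem_union, mem_insert] at hb
            rcases hb with hb | (rfl | hb)
            · exact mYU a ha.2 hb
            · exact ha.1 rfl
            · exact mYW a ha.2 hb
          have ihres := ih (t+1) (by omega) X (Y.erase e) h1 h2 h3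
          rw [hU1, hW1, greedyAux₁ heY] at ihres
          have hsum : ∑ i ∈ Y.erase e, x i + x e = ∑ i ∈ Y, x i :=
            sum_erase_add Y x heY
          linarith
        · by_cases heX : e ∈ X
          · -- e ∈ X : mismatched sign, two bisubmodular inequalities
            have h1 : Disjoint (X.erase e) Y := hXY.mono_left (erase_subset e X)
            have h2 : Disjoint (X.erase e) (U (t+1) ∪ W (t+1)) := by
              rw [hU1, hW1, disjoint_left]
              intro a ha hb
              simp only [mem_erase] at ha
              simp only [mem_union, mem_insert] at hb
              rcases hb with hb | (rfl | hb)
              · exact mXU a ha.2 hb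
              · exact ha.1 rfl
              · exact mXW a ha.2 hb
            have h3 : Disjoint Y (U (t+1) ∪ W (t+1)) := by
              rw [hU1, hW1, disjoint_left]
              intro a ha hb
              simp only [mem_union, mem_insert] at hb
              rcases hb with hb | (rfl | hb)
              · exact mYU a ha hb
              · exact heY ha
              · exact mYW a ha hb
            have ihres := ih (t+1) (by omega) (X.erase e) Y h1 h2 h3
            rw [hU1, hW1] at ihres
            have d1 : Disjoint (X ∪ U t) (Y ∪ W t) := by
              simp only [disjoint_union_left, disjoint_union_right]
              exact ⟨⟨hXY, hYU.symm⟩, hXW, hUW⟩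
            have d3 : Disjoint (X.erase e ∪ U t) (Y ∪ W t) :=
              d1.mono_left (union_subset_union (erase_subset e X) (Subset.refl (U t)))
            have b1 := hbi (X ∪ U t) (Y ∪ W t) (U t) (insert e (W t)) d1 hd1
            have b2 := hbi (X.erase e ∪ U t) (Y ∪ W t) (U t) (insert e (W t)) d3 hd1
            rw [greedyAux₃ hXY.symm hYW hYU hXW hXU hUW.symm heX heW,
              greedyAux₂ hXY.symm hYW hYU hXW hXU hUW.symm heX heW,
              union_inter_cancel_right, greedyAux₄ heY] at b1
            rw [greedyAux₇ hXY.symm hYW hYU hXW hXU hUW.symm heX heW,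
              greedyAux₆ hXY.symm hYW hYU hXW hXU hUW.symm heX heW,
              union_inter_cancel_right, greedyAux₄ heY] at b2
            have hsum : ∑ i ∈ X.erase e, x i + x e = ∑ i ∈ X, x i :=
              sum_erase_add X x heX
            linarith
          · -- e ∉ X ∪ Y : one bisubmodular inequality
            have h2 : Disjoint X (U (t+1) ∪ W (t+1)) := by
              rw [hU1, hW1, disjoint_left]
              intro a ha hb
              simp only [mem_union, mem_insert] at hb
              rcases hb with hb | (rfl | hb)
              · exact mXU a ha hb
              · exact heX ha
              · exact mXW a ha hb
            have h3 : Disjoint Y (U (t+1) ∪ W (t+1)) := by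
              rw [hU1, hW1, disjoint_left]
              intro a ha hb
              simp only [mem_union, mem_insert] at hb
              rcases hb with hb | (rfl | hb)
              · exact mYU a ha hb
              · exact heY ha
              · exact mYW a ha hb
            have ihres := ih (t+1) (by omega) X Y hXY h2 h3
            rw [hU1, hW1] at ihres
            have d1 : Disjoint (X ∪ U t) (Y ∪ W t) := by
              simp only [disjoint_union_left, disjoint_union_right]
              exact ⟨⟨hXY, hYU.symm⟩, hXW, hUW⟩
            have b1 := hbi (X ∪ U t) (Y ∪ W t) (U t) (insert e (W t)) d1 hd1
            rw [greedyAux₁₀ hXY.symm hYW hYU hXW hXU hUW.symm heX heU,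
              greedyAux₉ hXY.symm hYW hYU hXW hXU hUW.symm heX heU,
              union_inter_cancel_right, greedyAux₄ heY] at b1
            linarith
  intro X Y hXY
  have h := key n 0 (by omega) X Y hXY (by simp [hU0, hW0]) (by simp [hU0, hW0])
  rw [hU0, hW0, union_empty, union_empty, hf0] at h
  linarith
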